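/- Let U ⊆ ℝⁿ be open and connected and h : U → ℝⁿ a C² map with Dh(x) invertible for all x ∈ U. Define the cotangent lift H : U × ℝⁿ → ℝⁿ × ℝⁿ by H(x, η) = (h(x), (Dh(x)ᵀ)⁻¹ η), and let τ be the two-tensor on U × ℝⁿ whose value on tangent vectors (a, β), (a', β') at any point is τ((a,β),(a',β')) = ⟨a, β'⟩. Then H preserves τ — i.e., τ(DH(x,η)v, DH(x,η)w) = τ(v,w) for every (x,η) and all tangent vectors v,w — if and only if the second derivative of h vanishes identically, i.e., h is the restriction of an affine map. -/

import Mathlib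

open Matrix Set

attribute [local instance] Matrix.normedAddCommGroup Matrix.normedSpace

/-- The continuous linear map `u ↦ A *ᵥ u` associated to a matrix `A`. -/
noncomputable def matCLM {n : ℕ} (A : Matrix (Fin n) (Fin n) ℝ) :
    (Fin n → ℝ) →L[ℝ] (Fin n → ℝ) :=
  LinearMap.toContinuousLinearMap A.mulVecLin

namespace CotangentAux

variable {n : ℕ}

@[simp] lemma matCLM_apply (A : Matrix (Fin n) (Fin n) ℝ) (v : Fin n → ℝ) :
    matCLM A v = A *ᵥ v := rfl

/-- `matCLM` as a continuous linear map in the matrix argument. -/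
noncomputable def matCLML (n : ℕ) :
    Matrix (Fin n) (Fin n) ℝ →L[ℝ] ((Fin n → ℝ) →L[ℝ] (Fin n → ℝ)) :=
  LinearMap.toContinuousLinearMap
    { toFun := fun A => matCLM A
      map_add' := fun A B => by
        apply ContinuousLinearMap.ext; intro v
        simp [Matrix.add_mulVec]
      map_smul' := fun c A => by
        apply ContinuousLinearMap.ext; intro v
        simp [Matrix.smul_mulVec] }

@[simp] lemma matCLML_apply (A : Matrix (Fin n) (Fin n) ℝ) :
    matCLML n A = matCLM A := rfl

/-- transpose as a continuous linear map. -/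
noncomputable def transCLM (n : ℕ) :
    Matrix (Fin n) (Fin n) ℝ →L[ℝ] Matrix (Fin n) (Fin n) ℝ :=
  LinearMap.toContinuousLinearMap (Matrix.transposeLinearEquiv (Fin n) (Fin n) ℝ ℝ).toLinearMap

@[simp] lemma transCLM_apply (A : Matrix (Fin n) (Fin n) ℝ) :
    transCLM n A = Aᵀ := rfl

lemma mulVec_dot (A : Matrix (Fin n) (Fin n) ℝ) (a u : Fin n → ℝ) :
    (A *ᵥ a) ⬝ᵥ u = a ⬝ᵥ (Aᵀ *ᵥ u) := by
  conv_rhs => rw [dotProduct_mulVec, vecMul_transpose]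

lemma eq_of_mulVec_eq {A B : Matrix (Fin n) (Fin n) ℝ}
    (hAB : ∀ v, A *ᵥ v = B *ᵥ v) : A = B := by
  ext i j
  simpa using congrFun (hAB (Pi.single j 1)) i

lemma isConst_of_zero_deriv {F : Type*} [NormedAddCommGroup F] [NormedSpace ℝ F]
    {U : Set (Fin n → ℝ)} (hU : IsOpen U) (hconn : IsPreconnected U)
    {f : (Fin n → ℝ) → F} (hf : ∀ x ∈ U, HasFDerivAt f (0 : (Fin n → ℝ) →L[ℝ] F) x)
    {x y : Fin n → ℝ} (hx : x ∈ U) (hy : y ∈ U) : f x = f y := by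
  have hloc : IsLocallyConstant (fun z : U => f z) := by
    rw [IsLocallyConstant.iff_eventually_eq]
    rintro ⟨z, hz⟩
    obtain ⟨r, hr, hball⟩ := Metric.isOpen_iff.1 hU z hz
    have hconst : ∀ w ∈ Metric.ball z r, f w = f z := by
      intro w hw
      refine (convex_ball z r).is_const_of_fderivWithin_eq_zero
        (fun u hu => (hf u (hball hu)).differentiableAt.differentiableWithinAt)
        (fun u hu => ?_) hw (Metric.mem_ball_self hr)
      rw [fderivWithin_of_isOpen Metric.isOpen_ball hu, (hf u (hball hu)).fderiv]
    have hev : ∀ᶠ w in nhds z, f w = f z :=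
      Filter.eventually_of_mem (Metric.ball_mem_nhds z hr) hconst
    exact (continuousAt_subtype_val (x := (⟨z, hz⟩ : U))).eventually hev
  haveI := Subtype.preconnectedSpace hconn
  exact hloc.apply_eq_of_isPreconnected isPreconnected_univ
    (Set.mem_univ ⟨x, hx⟩) (Set.mem_univ ⟨y, hy⟩)

end CotangentAux

open CotangentAux in
/-- Let `U ⊆ ℝⁿ` be open and connected and `h : U → ℝⁿ` a C² map (with
Jacobian `Dh` and second derivative `D2h`) such that `Dh x` is invertible for all `x ∈ U`.
Let `H` be the cotangent lift `H (x, η) = (h x, ((Dh x)ᵀ)⁻¹ η)` (with Fréchet derivative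
`DH`), and let `τ` be the two-tensor `τ ((a, β), (a', β')) = ⟨a, β'⟩` on `U × ℝⁿ`.
Then `H` preserves `τ` — i.e. `τ (DH p v) (DH p w) = τ v w` at every point `p` of
`U × ℝⁿ` and all tangent vectors `v, w` — iff the second derivative of `h` vanishes
identically, i.e. iff `h` is the restriction of an affine map. -/
theorem cotangent_lift_preserves_tensor_iff_affine {n : ℕ}
    (U : Set (Fin n → ℝ)) (hU : IsOpen U) (hconn : IsConnected U)
    (h : (Fin n → ℝ) → (Fin n → ℝ))
    (Dh : (Fin n → ℝ) → Matrix (Fin n) (Fin n) ℝ)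
    (D2h : (Fin n → ℝ) → (Fin n → ℝ) →L[ℝ] Matrix (Fin n) (Fin n) ℝ)
    (hh : ∀ x ∈ U, HasFDerivAt h (matCLM (Dh x)) x)
    (hDh : ∀ x ∈ U, HasFDerivAt Dh (D2h x) x)
    (hinv : ∀ x ∈ U, IsUnit (Dh x).det)
    (H : (Fin n → ℝ) × (Fin n → ℝ) → (Fin n → ℝ) × (Fin n → ℝ))
    (hHdef : ∀ p : (Fin n → ℝ) × (Fin n → ℝ), H p = (h p.1, ((Dh p.1)ᵀ)⁻¹.mulVec p.2))
    (DH : (Fin n → ℝ) × (Fin n → ℝ) →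
      ((Fin n → ℝ) × (Fin n → ℝ)) →L[ℝ] ((Fin n → ℝ) × (Fin n → ℝ)))
    (hDH : ∀ p : (Fin n → ℝ) × (Fin n → ℝ), p.1 ∈ U → HasFDerivAt H (DH p) p)
    (τ : ((Fin n → ℝ) × (Fin n → ℝ)) → ((Fin n → ℝ) × (Fin n → ℝ)) → ℝ)
    (hτ : ∀ v w : (Fin n → ℝ) × (Fin n → ℝ), τ v w = v.1 ⬝ᵥ w.2) :
    ((∀ p : (Fin n → ℝ) × (Fin n → ℝ), p.1 ∈ U →
          ∀ v w, τ (DH p v) (DH p w) = τ v w)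
        ↔ (∀ x ∈ U, D2h x = 0))
    ∧ ((∀ p : (Fin n → ℝ) × (Fin n → ℝ), p.1 ∈ U →
          ∀ v w, τ (DH p v) (DH p w) = τ v w)
        ↔ ∃ (A : Matrix (Fin n) (Fin n) ℝ) (b : Fin n → ℝ),
            ∀ x ∈ U, h x = A.mulVec x + b) := by
  classical
  have hdet' : ∀ x ∈ U, IsUnit ((Dh x)ᵀ).det := fun x hx => by
    rw [Matrix.det_transpose]; exact hinv x hx
  -- first component of the derivative of H
  have key1 : ∀ x, x ∈ U → ∀ (η : Fin n → ℝ) (v : (Fin n → ℝ) × (Fin n → ℝ)),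
      (DH (x, η) v).1 = Dh x *ᵥ v.1 := by
    intro x hx η v
    have h1 := hasFDerivAt_fst.comp (x, η) (hDH (x, η) hx)
    have h2 := (hh x hx).comp ((x, η) : (Fin n → ℝ) × (Fin n → ℝ))
      (hasFDerivAt_fst (𝕜 := ℝ) (p := ((x, η) : (Fin n → ℝ) × (Fin n → ℝ))))
    have hfun : Prod.fst ∘ H = h ∘ Prod.fst := funext fun q => by simp [Function.comp, hHdef q]
    rw [hfun] at h1
    have := ContinuousLinearMap.ext_iff.1 (h1.unique h2) v
    simpa using this
  -- key identity for the second component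
  have key2 : ∀ x, x ∈ U → ∀ (η : Fin n → ℝ) (v : (Fin n → ℝ) × (Fin n → ℝ)),
      (Dh x)ᵀ *ᵥ (DH (x, η) v).2 + (D2h x v.1)ᵀ *ᵥ (((Dh x)ᵀ)⁻¹ *ᵥ η) = v.2 := by
    intro x hx η v
    have hDhfst : HasFDerivAt (fun q : (Fin n → ℝ) × (Fin n → ℝ) => Dh q.1)
        ((D2h x).comp (ContinuousLinearMap.fst ℝ _ _)) (x, η) := by
      have := (hDh x hx).comp ((x, η) : (Fin n → ℝ) × (Fin n → ℝ))
        (hasFDerivAt_fst (𝕜 := ℝ) (p := ((x, η) : (Fin n → ℝ) × (Fin n → ℝ))))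
      exact this
    have hc : HasFDerivAt
        (fun q : (Fin n → ℝ) × (Fin n → ℝ) => (matCLML n) (transCLM n (Dh q.1)))
        (((matCLML n).comp (transCLM n)).comp
          ((D2h x).comp (ContinuousLinearMap.fst ℝ _ _))) (x, η) := by
      have := ((matCLML n).comp (transCLM n)).hasFDerivAt.comp
        ((x, η) : (Fin n → ℝ) × (Fin n → ℝ)) hDhfst
      exact this
    have hu : HasFDerivAt (fun q : (Fin n → ℝ) × (Fin n → ℝ) => (H q).2)
        ((ContinuousLinearMap.snd ℝ _ _).comp (DH (x, η))) (x, η) := by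
      have := hasFDerivAt_snd.comp ((x, η) : (Fin n → ℝ) × (Fin n → ℝ)) (hDH (x, η) hx)
      simpa [Function.comp] using this
    have hF := hc.clm_apply hu
    have hFeq : (fun q : (Fin n → ℝ) × (Fin n → ℝ) => q.2)
        =ᶠ[nhds ((x, η) : (Fin n → ℝ) × (Fin n → ℝ))]
        (fun q => (matCLML n) (transCLM n (Dh q.1)) ((H q).2)) := by
      filter_upwards [IsOpen.mem_nhds (hU.prod isOpen_univ)
        (show ((x, η) : (Fin n → ℝ) × (Fin n → ℝ)) ∈ U ×ˢ univ from ⟨hx, trivial⟩)] with q hq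
      have hq1 : q.1 ∈ U := hq.1
      show q.2 = (Dh q.1)ᵀ *ᵥ (H q).2
      rw [hHdef q]
      show q.2 = (Dh q.1)ᵀ *ᵥ (((Dh q.1)ᵀ)⁻¹ *ᵥ q.2)
      rw [mulVec_mulVec, Matrix.mul_nonsing_inv _ (hdet' q.1 hq1), one_mulVec]
    have hsnd := hF.congr_of_eventuallyEq hFeq
    have huniq := hsnd.unique hasFDerivAt_snd
    have happ := ContinuousLinearMap.ext_iff.1 huniq v
    simp only [ContinuousLinearMap.add_apply, ContinuousLinearMap.coe_comp',
      Function.comp_apply, ContinuousLinearMap.flip_apply, ContinuousLinearMap.coe_snd',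
      matCLML_apply, transCLM_apply, matCLM_apply] at happ
    rw [hHdef (x, η)] at happ
    simpa using happ
  -- value of τ on image vectors
  have tau_eq : ∀ x, x ∈ U → ∀ (η : Fin n → ℝ) (v w : (Fin n → ℝ) × (Fin n → ℝ)),
      τ (DH (x, η) v) (DH (x, η) w)
        = v.1 ⬝ᵥ w.2 - v.1 ⬝ᵥ ((D2h x w.1)ᵀ *ᵥ (((Dh x)ᵀ)⁻¹ *ᵥ η)) := by
    intro x hx η v w
    rw [hτ, key1 x hx η v, mulVec_dot,
      eq_sub_of_add_eq (key2 x hx η w), dotProduct_sub]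
  -- the first equivalence
  have hiff1 : (∀ p : (Fin n → ℝ) × (Fin n → ℝ), p.1 ∈ U →
      ∀ v w, τ (DH p v) (DH p w) = τ v w) ↔ (∀ x ∈ U, D2h x = 0) := by
    constructor
    · intro hpres x hx
      apply ContinuousLinearMap.ext
      intro a'
      have S : ∀ μ : Fin n → ℝ, (D2h x a')ᵀ *ᵥ μ = 0 := by
        intro μ
        set c : Fin n → ℝ := (D2h x a')ᵀ *ᵥ μ with hc
        set η : Fin n → ℝ := (Dh x)ᵀ *ᵥ μ with hη
        have hμ : ((Dh x)ᵀ)⁻¹ *ᵥ η = μ := by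
          rw [hη, mulVec_mulVec, Matrix.nonsing_inv_mul _ (hdet' x hx), one_mulVec]
        have hp := hpres (x, η) hx (c, 0) (a', 0)
        rw [tau_eq x hx η (c, 0) (a', 0), hτ, hμ] at hp
        simp only at hp
        have : c ⬝ᵥ c = 0 := by
          have := hp
          simpa [hc] using this
        exact dotProduct_self_eq_zero.1 this
      have : (D2h x a')ᵀ = 0 := eq_of_mulVec_eq (fun v => by rw [S v, Matrix.zero_mulVec])
      simpa using congrArg Matrix.transpose this
    · intro hz p hp1 v w
      obtain ⟨x, η⟩ := p
      rw [tau_eq x hp1 η v w, hτ, hz x hp1]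
      simp
  -- the affine equivalence
  have affine_iff : (∀ x ∈ U, D2h x = 0) ↔
      ∃ (A : Matrix (Fin n) (Fin n) ℝ) (b : Fin n → ℝ), ∀ x ∈ U, h x = A.mulVec x + b := by
    constructor
    · intro hz
      obtain ⟨x₀, hx₀⟩ := hconn.nonempty
      have hconst : ∀ x ∈ U, Dh x = Dh x₀ := fun x hx =>
        isConst_of_zero_deriv hU hconn.isPreconnected
          (fun y hy => (hz y hy) ▸ hDh y hy) hx hx₀
      refine ⟨Dh x₀, h x₀ - Dh x₀ *ᵥ x₀, fun x hx => ?_⟩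
      have hg : ∀ y ∈ U, HasFDerivAt (fun z => h z - Dh x₀ *ᵥ z)
          (0 : (Fin n → ℝ) →L[ℝ] (Fin n → ℝ)) y := by
        intro y hy
        have h2 : HasFDerivAt (fun z => Dh x₀ *ᵥ z) (matCLM (Dh x₀)) y :=
          (matCLM (Dh x₀)).hasFDerivAt
        have := (hh y hy).sub h2
        rwa [hconst y hy, sub_self] at this
      have := isConst_of_zero_deriv hU hconn.isPreconnected hg hx hx₀
      have hx' : h x = (h x₀ - Dh x₀ *ᵥ x₀) + Dh x₀ *ᵥ x := sub_eq_iff_eq_add.mp this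
      rw [hx']; abel
    · rintro ⟨A, b, hA⟩ x hx
      have hDhx : ∀ y ∈ U, Dh y = A := by
        intro y hy
        have haff : HasFDerivAt (fun z => A *ᵥ z + b) (matCLM A) y :=
          (matCLM A).hasFDerivAt.add_const b
        have h2 : HasFDerivAt h (matCLM A) y :=
          haff.congr_of_eventuallyEq
            (Filter.eventuallyEq_of_mem (hU.mem_nhds hy) (fun z hz => hA z hz))
        have := (hh y hy).unique h2
        exact eq_of_mulVec_eq (fun v => ContinuousLinearMap.ext_iff.1 this v)
      have hconstD : HasFDerivAt Dh
          (0 : (Fin n → ℝ) →L[ℝ] Matrix (Fin n) (Fin n) ℝ) x := by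
        have hc : HasFDerivAt (fun _ : Fin n → ℝ => A)
            (0 : (Fin n → ℝ) →L[ℝ] Matrix (Fin n) (Fin n) ℝ) x := hasFDerivAt_const A x
        exact hc.congr_of_eventuallyEq
          (Filter.eventuallyEq_of_mem (hU.mem_nhds hx) (fun z hz => hDhx z hz))
      exact (hDh x hx).unique hconstD
  exact ⟨hiff1, hiff1.trans affine_iff⟩
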